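/- Let T be an ℓ×t Z₊-matrix (off-diagonal entries nonpositive, column sums nonnegative) and let T^{(k)} denote the matrix after k steps of Gaussian elimination with nonnegative row operations as in the elimination procedure for Z₊-matrices. Then for every k and every column j ∈ [k+1, t], the partial column sum Σ_{i=k+1}^{ℓ} T^{(k)}_{ij} is nonnegative; i.e., the lower-right (ℓ-k)×(t-k) submatrix of T^{(k)} is again a Z₊-matrix. -/

import Mathlib

/-- One step of Gaussian elimination (0-indexed pivot position `(k,k)`): if the pivot
is positive, scale row `k` to make the pivot `1` and add the appropriate nonnegative
multiples of the (original) row `k` to the rows below to zero out column `k`;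
otherwise do nothing. -/
noncomputable def elimStep {l t : ℕ} (k : ℕ) (T : Matrix (Fin l) (Fin t) ℝ) :
    Matrix (Fin l) (Fin t) ℝ :=
  if h : k < l ∧ k < t then
    let pr : Fin l := ⟨k, h.1⟩
    let pc : Fin t := ⟨k, h.2⟩
    if 0 < T pr pc then
      fun i j =>
        if i = pr then T i j / T pr pc
        else if k < (i : ℕ) then T i j - T i pc / T pr pc * T pr j
        else T i j
    else T
  else T

/-- The matrix after `k` steps of Gaussian elimination. -/
noncomputable def elimIter {l t : ℕ} (T : Matrix (Fin l) (Fin t) ℝ) :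
    ℕ → Matrix (Fin l) (Fin t) ℝ
  | 0 => T
  | k + 1 => elimStep k (elimIter T k)

lemma sum_split {l : ℕ} (k : ℕ) (hk : k < l) (f : Fin l → ℝ) :
    ∑ i ∈ Finset.univ.filter (fun i : Fin l => k ≤ (i : ℕ)), f i
      = f ⟨k, hk⟩ + ∑ i ∈ Finset.univ.filter (fun i : Fin l => k + 1 ≤ (i : ℕ)), f i := by
  have hset : Finset.univ.filter (fun i : Fin l => k ≤ (i : ℕ))
      = insert ⟨k, hk⟩ (Finset.univ.filter (fun i : Fin l => k + 1 ≤ (i : ℕ))) := by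
    ext i
    simp only [Finset.mem_filter, Finset.mem_univ, true_and, Finset.mem_insert, Fin.ext_iff]
    omega
  rw [hset, Finset.sum_insert (by simp)]

theorem stmt_8 (l t : ℕ) (T : Matrix (Fin l) (Fin t) ℝ)
    (hoff : ∀ (i : Fin l) (j : Fin t), (i : ℕ) ≠ (j : ℕ) → T i j ≤ 0)
    (hcol : ∀ j, 0 ≤ ∑ i, T i j) :
    ∀ (k : ℕ) (j : Fin t), k ≤ (j : ℕ) →
      (0 ≤ ∑ i ∈ Finset.univ.filter (fun i : Fin l => k ≤ (i : ℕ)),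
        elimIter T k i j) ∧
      (∀ i : Fin l, k ≤ (i : ℕ) → (i : ℕ) ≠ (j : ℕ) → elimIter T k i j ≤ 0) := by
  intro k
  induction k with
  | zero =>
    intro j _
    refine ⟨?_, fun i _ hij => hoff i j hij⟩
    simpa [elimIter] using hcol j
  | succ k ih =>
    intro j hj
    set S := elimIter T k with hS
    have hiter : elimIter T (k + 1) = elimStep k S := rfl
    by_cases hl : k < l
    · by_cases ht : k < t
      · have h : k < l ∧ k < t := ⟨hl, ht⟩
        set pr : Fin l := ⟨k, hl⟩ with hpr
        set pc : Fin t := ⟨k, ht⟩ with hpc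
        obtain ⟨Hsj, Hoffj⟩ := ih j (by omega)
        obtain ⟨Hsc, Hoffc⟩ := ih pc (le_refl k)
        by_cases hp : 0 < S pr pc
        · -- positive pivot case
          have hM : ∀ i : Fin l, k + 1 ≤ (i : ℕ) →
              elimStep k S i j = S i j - S i pc / S pr pc * S pr j := by
            intro i hi
            have hipr : i ≠ pr := by
              intro hh; rw [hh] at hi; simp [hpr] at hi
            rw [elimStep, dif_pos h]
            exact (congrFun (congrFun (if_pos hp) i) j).trans
              ((if_neg hipr).trans (if_pos (show k < (i : ℕ) by omega)))
          set p := S pr pc with hpdef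
          set A := ∑ i ∈ Finset.univ.filter (fun i : Fin l => k + 1 ≤ (i : ℕ)), S i j with hA
          set B := ∑ i ∈ Finset.univ.filter (fun i : Fin l => k + 1 ≤ (i : ℕ)), S i pc with hB
          have hsplitj : S pr j + A = ∑ i ∈ Finset.univ.filter (fun i : Fin l => k ≤ (i : ℕ)), S i j :=
            (sum_split k hl (fun i => S i j)).symm
          have hsplitc : p + B = ∑ i ∈ Finset.univ.filter (fun i : Fin l => k ≤ (i : ℕ)), S i pc :=
            (sum_split k hl (fun i => S i pc)).symm
          have hBp : -p ≤ B := by rw [← hsplitc] at Hsc; linarith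
          have hSprj : S pr j ≤ 0 := Hoffj pr (by simp [hpr]) (by simp [hpr]; omega)
          have hAj : -S pr j ≤ A := by rw [← hsplitj] at Hsj; linarith
          constructor
          · rw [hiter]
            rw [Finset.sum_congr rfl (fun i hi => hM i (by simpa using (Finset.mem_filter.mp hi).2))]
            rw [Finset.sum_sub_distrib, ← Finset.sum_mul, ← Finset.sum_div, ← hA, ← hB]
            have key : 0 ≤ p * A - B * S pr j := by nlinarith
            have heq : A - B / p * S pr j = (p * A - B * S pr j) / p := by
              field_simp
            rw [heq]
            exact div_nonneg key hp.le
          · intro i hi hij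
            rw [hiter, hM i hi]
            have h1 : S i j ≤ 0 := Hoffj i (by omega) hij
            have h2 : S i pc ≤ 0 := Hoffc i (by omega) (by simp [hpc]; omega)
            have hd : S i pc / p ≤ 0 := div_nonpos_of_nonpos_of_nonneg h2 hp.le
            nlinarith [mul_nonneg (neg_nonneg.2 hd) (neg_nonneg.2 hSprj)]
        · -- nonpositive pivot: elimStep is the identity
          have hid : elimStep k S = S := by
            rw [elimStep, dif_pos h]
            exact if_neg hp
          rw [hiter, hid]
          have hSprj : S pr j ≤ 0 := Hoffj pr (by simp [hpr]) (by simp [hpr]; omega)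
          constructor
          · have hsp := sum_split k hl (fun i => S i j)
            rw [hsp] at Hsj
            linarith
          · intro i hi hij
            exact Hoffj i (by omega) hij
      · -- k ≥ t : vacuous since j < t ≤ k
        omega
    · -- k ≥ l : identity step, empty filter
      have hid : elimStep k S = S := by
        simp only [elimStep, dif_neg (by omega : ¬(k < l ∧ k < t))]
      have hempty : Finset.univ.filter (fun i : Fin l => k + 1 ≤ (i : ℕ)) = ∅ := by
        ext i
        simp only [Finset.mem_filter, Finset.mem_univ, true_and, Finset.notMem_empty, iff_false]
        omega
      rw [hiter, hid]
      refine ⟨by rw [hempty]; simp, fun i hi _ => by omega⟩
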